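/- arXiv:0801.4867 — 3 statements merged into one kernel-verified Lean document; each statement's English description precedes it below -/
import Mathlib

section
/- Define the sequence p_0 = p and p_{k+1} = (15/2)p_k^2 - (25/2)p_k^3 + (15/2)p_k^4 - (3/2)p_k^5. Then for every k ≥ 1 and every p with 0 < p ≤ 1, p_k < (2/15)·((15/2)p)^{2^k}. -/
/-- Let `p₀ = p` and `p_{k+1} = (15/2)p_k² - (25/2)p_k³ + (15/2)p_k⁴ - (3/2)p_k⁵`.
Then for every `k ≥ 1` and every `0 < p ≤ 1`,
`p_k < (2/15)·((15/2)p)^(2^k)`. -/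
theorem concatenated_param_bound (p : ℝ) (hp : 0 < p) (hp1 : p ≤ 1)
    (P : ℕ → ℝ) (h0 : P 0 = p)
    (hrec : ∀ k, P (k+1) =
      (15/2) * (P k)^2 - (25/2) * (P k)^3 + (15/2) * (P k)^4 - (3/2) * (P k)^5) :
    ∀ k : ℕ, 1 ≤ k → P k < (2/15) * ((15/2) * p) ^ (2 ^ k) := by
  have key : ∀ k : ℕ, 0 < P k ∧ P k ≤ 1 ∧
      (1 ≤ k → P k < (2/15) * ((15/2) * p) ^ (2 ^ k)) := by
    intro k
    induction k with
    | zero => exact ⟨h0 ▸ hp, h0 ▸ hp1, by omega⟩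
    | succ n ih =>
      obtain ⟨hpos, hle, hbd⟩ := ih
      have hq := hrec n
      have hfpos : 0 < P (n+1) := by
        rw [hq]; nlinarith [sq_nonneg (P n), sq_nonneg (1 - P n), sq_nonneg (P n * (1 - P n)), mul_pos hpos hpos]
      have hfle : P (n+1) ≤ 1 := by
        rw [hq]
        have h1 : (0:ℝ) ≤ (1 - P n)^3 * (-3*(P n)^2 + 6*(P n) + 2) :=
          mul_nonneg (pow_nonneg (by linarith) 3) (by nlinarith)
        nlinarith [h1]
      have hflt : P (n+1) < (15/2) * (P n)^2 := by
        rw [hq]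
        nlinarith [pow_pos hpos 3, sq_nonneg (P n), mul_pos (mul_pos hpos hpos) hpos]
      refine ⟨hfpos, hfle, fun _ => ?_⟩
      rcases Nat.eq_zero_or_pos n with h | h
      · subst h
        simp only [h0] at hflt
        calc P 1 < (15/2) * p^2 := hflt
          _ = (2/15) * ((15/2) * p) ^ (2^1) := by norm_num; ring
      · have hbn := hbd h
        have hsq : (P n)^2 < ((2/15) * ((15/2) * p) ^ (2 ^ n))^2 :=
          pow_lt_pow_left₀ hbn (le_of_lt hpos) (by norm_num)
        calc P (n+1) < (15/2) * (P n)^2 := hflt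
          _ < (15/2) * ((2/15) * ((15/2)*p) ^ (2^n))^2 := by nlinarith
          _ = (2/15) * ((15/2)*p) ^ (2^(n+1)) := by
              rw [pow_succ 2 n, pow_mul]; ring
  exact fun k hk => (key k).2.2 hk
end

section
/- Main scaling theorem: Let 0 < p < 2/15, let m be a positive integer, and let ε ∈ (0,1]. Define p_0 = p, p_{k+1} = (15/2)p_k^2 - (25/2)p_k^3 + (15/2)p_k^4 - (3/2)p_k^5, and p_total(k,m) = 1 - (1 - p_k)^m. If k ≥ 1 satisfies 5^k > (ln(m/ε))^3 / (-ln(15p/2))^3, then p_total(k,m) < ε. -/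
/-- Main scaling theorem. Let `0 < p < 2/15`, `m` a positive integer,
`ε ∈ (0,1]`. With `p₀ = p`,
`p_{k+1} = (15/2)p_k² - (25/2)p_k³ + (15/2)p_k⁴ - (3/2)p_k⁵` and
`p_total(k,m) = 1 - (1 - p_k)^m`, if `k ≥ 1` satisfies
`5^k > (ln(m/ε))³ / (-ln(15p/2))³`, then `p_total(k,m) < ε`. -/
theorem main_scaling (p ε : ℝ) (m k : ℕ)
    (hp : 0 < p) (hp' : p < 2/15) (hε : 0 < ε) (hε1 : ε ≤ 1) (hm : 0 < m)
    (P : ℕ → ℝ) (h0 : P 0 = p)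
    (hrec : ∀ j, P (j+1) =
      (15/2) * (P j)^2 - (25/2) * (P j)^3 + (15/2) * (P j)^4 - (3/2) * (P j)^5)
    (hk1 : 1 ≤ k)
    (hk : (5:ℝ)^k > (Real.log (m / ε))^3 / (-Real.log (15 * p / 2))^3) :
    1 - (1 - P k)^m < ε := by
  set q : ℝ := 15 * p / 2 with hq
  have hq0 : 0 < q := by positivity
  have hq1 : q < 1 := by rw [hq]; linarith
  -- invariant
  have key : ∀ j, 0 ≤ P j ∧ 15/2 * P j ≤ q ^ (2^j) := by
    intro j
    induction j with
    | zero =>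
      refine ⟨by rw [h0]; linarith, ?_⟩
      simp [h0, hq]; linarith
    | succ j ih =>
      obtain ⟨h1, h2⟩ := ih
      have hpow1 : q ^ (2^j) ≤ 1 := pow_le_one₀ hq0.le hq1.le
      have hPle : P j ≤ 2/15 := by nlinarith
      have hnn : 0 ≤ P (j+1) := by
        rw [hrec]
        nlinarith [sq_nonneg (P j), mul_nonneg (sq_nonneg (P j)) h1,
          mul_nonneg (mul_nonneg (sq_nonneg (P j)) h1) h1,
          mul_nonneg (mul_nonneg (mul_nonneg (sq_nonneg (P j)) h1) h1) h1]
      have hle : P (j+1) ≤ 15/2 * (P j)^2 := by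
        rw [hrec]
        nlinarith [mul_nonneg (mul_nonneg (mul_nonneg h1 h1) h1) (sq_nonneg (P j - 5/2)),
          mul_nonneg (mul_nonneg h1 h1) h1]
      refine ⟨hnn, ?_⟩
      have hsq : (15/2 * P j)^2 ≤ (q ^ (2^j))^2 := by
        apply pow_le_pow_left₀ (by linarith) h2
      calc 15/2 * P (j+1) ≤ 15/2 * (15/2 * (P j)^2) := by linarith
        _ = (15/2 * P j)^2 := by ring
        _ ≤ (q ^ (2^j))^2 := hsq
        _ = q ^ (2^(j+1)) := by rw [← pow_mul, pow_succ]
  obtain ⟨hPnn, hPle⟩ := key k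
  -- logarithm bound
  have hL : 0 ≤ Real.log ((m : ℝ) / ε) := by
    apply Real.log_nonneg
    rw [le_div_iff₀ hε]
    have : (1:ℝ) ≤ (m:ℝ) := by exact_mod_cast hm
    linarith
  have hc : 0 < -Real.log q := by
    have := Real.log_neg hq0 hq1
    linarith
  have hcube : (Real.log ((m:ℝ)/ε))^3 < ((5:ℝ)^k) * (-Real.log q)^3 := by
    rw [gt_iff_lt, div_lt_iff₀ (by positivity)] at hk
    linarith
  have hkey : Real.log ((m:ℝ)/ε) < (2:ℝ)^k * (-Real.log q) := by
    have h8 : ((5:ℝ)^k) * (-Real.log q)^3 ≤ ((2:ℝ)^k * (-Real.log q))^3 := by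
      have h85 : (5:ℝ)^k ≤ 8^k := by
        apply pow_le_pow_left₀ <;> norm_num
      have : ((2:ℝ)^k * (-Real.log q))^3 = 8^k * (-Real.log q)^3 := by
        rw [mul_pow, ← pow_mul, mul_comm k 3, pow_mul]; norm_num
      rw [this]
      apply mul_le_mul_of_nonneg_right h85 (by positivity)
    have h3 : (Real.log ((m:ℝ)/ε))^3 < ((2:ℝ)^k * (-Real.log q))^3 := lt_of_lt_of_le hcube h8
    exact lt_of_pow_lt_pow_left₀ 3 (by positivity) h3
  -- q^(2^k) < ε/m
  have hqm : q ^ (2^k) < ε / m := by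
    have hm0 : (0:ℝ) < m := by exact_mod_cast hm
    have hlog : Real.log (q ^ (2^k)) < Real.log (ε / m) := by
      rw [Real.log_pow, Real.log_div (ne_of_gt hε) (ne_of_gt hm0)]
      have : Real.log ((m:ℝ)/ε) = Real.log m - Real.log ε := Real.log_div (ne_of_gt hm0) (ne_of_gt hε)
      push_cast
      nlinarith [hkey, this]
    have := Real.exp_lt_exp.mpr hlog
    rwa [Real.exp_log (by positivity), Real.exp_log (by positivity)] at this
  have hPsmall : (m:ℝ) * P k < ε := by
    have hm0 : (0:ℝ) < m := by exact_mod_cast hm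
    have h1 : P k ≤ 2/15 * q ^ (2^k) := by linarith
    have h2 : (2:ℝ)/15 * q ^ (2^k) < ε / m := by
      have : (0:ℝ) < q ^ (2^k) := by positivity
      nlinarith
    rw [mul_comm, ← lt_div_iff₀ hm0]
    linarith
  -- Bernoulli
  have hbern : 1 + (m:ℝ) * (-P k) ≤ (1 + (-P k))^m := by
    apply one_add_mul_le_pow
    have : q ^ (2^k) ≤ 1 := pow_le_one₀ hq0.le hq1.le
    nlinarith
  have : (1:ℝ) - (m:ℝ) * P k ≤ (1 - P k)^m := by
    have e : (1:ℝ) + (-P k) = 1 - P k := by ring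
    rw [e] at hbern; linarith
  linarith
end

section
/- For a depolarizing channel parameter function p_total(k,m) = 1 - (1 - (2/15)((15/2)p)^{2^k})^m with fixed 0 < p < 2/15 and fixed ε ∈ (0,1], the minimal number of parallel chains n = 5^k needed to guarantee p_total < ε grows at most as O((ln m)^3) as m → ∞. -/
/-- For any real `x` there is `k` with `x < 2^k` and `2^k ≤ 2 * max x 1`. -/
lemma exists_pow_two_between (x : ℝ) :
    ∃ k : ℕ, x < 2 ^ k ∧ (2:ℝ) ^ k ≤ 2 * max x 1 := by
  have hex : ∃ k : ℕ, x < 2 ^ k := pow_unbounded_of_one_lt x (by norm_num)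
  classical
  refine ⟨Nat.find hex, Nat.find_spec hex, ?_⟩
  rcases Nat.eq_zero_or_pos (Nat.find hex) with h0 | hpos
  · rw [h0]
    have : (1:ℝ) ≤ max x 1 := le_max_right _ _
    simpa using by linarith
  · obtain ⟨j, hj⟩ := Nat.exists_eq_succ_of_ne_zero (Nat.pos_iff_ne_zero.mp hpos)
    have hnot : ¬ x < 2 ^ j := Nat.find_min hex (by omega)
    push_neg at hnot
    have hx : x ≤ max x 1 := le_max_left _ _
    rw [hj, pow_succ]
    nlinarith [hnot, hx]

/-- With `p_total(k,m) = 1 - (1 - (2/15)((15/2)p)^(2^k))^m` for fixed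
`0 < p < 2/15` and fixed `ε ∈ (0,1]`, the number of parallel chains `n = 5^k`
needed to guarantee `p_total < ε` grows at most as `O((ln m)³)` as `m → ∞`. -/
theorem chains_polylog (p ε : ℝ)
    (hp : 0 < p) (hp' : p < 2/15) (hε : 0 < ε) (hε1 : ε ≤ 1) :
    ∃ C : ℝ, 0 < C ∧ ∀ m : ℕ, 2 ≤ m → ∃ k : ℕ,
      1 - (1 - (2/15) * ((15/2) * p) ^ (2 ^ k))^m < ε ∧
      (5:ℝ)^k ≤ C * (Real.log m)^3 := by
  set q : ℝ := (15/2) * p with hqdef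
  have hq0 : 0 < q := by positivity
  have hq1 : q < 1 := by rw [hqdef]; nlinarith
  have hlq : Real.log q < 0 := Real.log_neg hq0 hq1
  set l : ℝ := -Real.log q with hldef
  have hl : 0 < l := by simpa [hldef] using neg_pos.mpr hlq
  have hlog2 : 0 < Real.log 2 := Real.log_pos (by norm_num)
  set B : ℝ := |Real.log (2 / (15 * ε))| with hBdef
  have hB : 0 ≤ B := abs_nonneg _
  set A : ℝ := (B / Real.log 2 + 1) / l + 1 / Real.log 2 with hAdef
  have hA : 0 < A := by
    rw [hAdef]
    have h1 : 0 ≤ (B / Real.log 2 + 1) / l := by positivity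
    have h2 : 0 < 1 / Real.log 2 := by positivity
    linarith
  refine ⟨8 * A ^ 3, by positivity, ?_⟩
  intro m hm
  have hm0 : (0:ℝ) < (m:ℝ) := by positivity
  have hm2 : (2:ℝ) ≤ (m:ℝ) := by exact_mod_cast hm
  set L0 : ℝ := Real.log (2 * m / (15 * ε)) / l with hL0def
  obtain ⟨k, hk1, hk2⟩ := exists_pow_two_between L0
  refine ⟨k, ?_, ?_⟩
  · -- probability bound
    set n : ℕ := 2 ^ k with hndef
    have hncast : ((n:ℕ):ℝ) = (2:ℝ) ^ k := by push_cast [hndef]; ring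
    set t : ℝ := (2/15) * q ^ n with htdef
    have hqn0 : 0 < q ^ n := pow_pos hq0 n
    have hqn1 : q ^ n ≤ 1 := pow_le_one₀ hq0.le hq1.le
    have ht0 : 0 ≤ t := by positivity
    have ht1 : t ≤ 1 := by rw [htdef]; nlinarith
    -- Bernoulli
    have hbern : 1 + (m:ℝ) * (-t) ≤ (1 + (-t)) ^ m :=
      one_add_mul_le_pow (by linarith) m
    have hmain : (m:ℝ) * t < ε := by
      -- from hk1 : L0 < 2^k
      have hlog : Real.log (2 * m / (15 * ε)) < (2:ℝ) ^ k * l := by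
        have := (div_lt_iff₀ hl).mp hk1
        linarith
      have hexp : q ^ n < 15 * ε / (2 * m) := by
        have hq' : q ^ n = Real.exp ((n:ℝ) * Real.log q) := by
          rw [Real.exp_nat_mul, Real.exp_log hq0]
        have hrhs : (0:ℝ) < 15 * ε / (2 * m) := by positivity
        rw [hq', ← Real.exp_log hrhs]
        apply Real.exp_lt_exp.mpr
        have hlog_inv : Real.log (15 * ε / (2 * m)) = - Real.log (2 * m / (15 * ε)) := by
          rw [← Real.log_inv]
          congr 1
          field_simp
        rw [hlog_inv, hncast]
        have : (2:ℝ) ^ k * l = -((2:ℝ) ^ k * Real.log q) := by rw [hldef]; ring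
        linarith [hlog, this.symm ▸ hlog]
      calc (m:ℝ) * t = (m:ℝ) * ((2/15) * q ^ n) := by rw [htdef]
        _ < (m:ℝ) * ((2/15) * (15 * ε / (2 * m))) := by
            apply mul_lt_mul_of_pos_left _ hm0
            apply mul_lt_mul_of_pos_left hexp (by norm_num)
        _ = ε := by field_simp
    have : 1 - (1 - t) ^ m ≤ (m:ℝ) * t := by
      have : (1 + (-t)) ^ m = (1 - t) ^ m := by ring_nf
      linarith [hbern, this]
    calc 1 - (1 - (2/15) * ((15/2) * p) ^ (2 ^ k)) ^ m
        = 1 - (1 - t) ^ m := by rw [htdef, hndef, hqdef]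
      _ ≤ (m:ℝ) * t := this
      _ < ε := hmain
  · -- size bound
    have hlogm : Real.log 2 ≤ Real.log m := Real.log_le_log (by norm_num) hm2
    have hlogm0 : 0 < Real.log m := lt_of_lt_of_le hlog2 hlogm
    have h1 : (1:ℝ) ≤ (1 / Real.log 2) * Real.log m := by
      rw [one_div, inv_mul_eq_div, le_div_iff₀ hlog2]
      linarith
    have hL0 : L0 ≤ ((B / Real.log 2 + 1) / l) * Real.log m := by
      have hsplit : Real.log (2 * m / (15 * ε)) = Real.log (2 / (15 * ε)) + Real.log m := by
        rw [show (2 * (m:ℝ) / (15 * ε)) = (2 / (15 * ε)) * m by ring]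
        rw [Real.log_mul (by positivity) (by positivity)]
      have hle : Real.log (2 / (15 * ε)) ≤ B := le_abs_self _
      have hBm : B ≤ (B / Real.log 2) * Real.log m := by
        rw [div_mul_eq_mul_div, le_div_iff₀ hlog2]
        nlinarith
      have : Real.log (2 * m / (15 * ε)) ≤ (B / Real.log 2 + 1) * Real.log m := by
        rw [hsplit]; nlinarith
      rw [hL0def, div_le_iff₀ hl] at *
      calc Real.log (2 * m / (15 * ε)) ≤ (B / Real.log 2 + 1) * Real.log m := this
        _ = (B / Real.log 2 + 1) / l * Real.log m * l := by field_simp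
    have hmax : max L0 1 ≤ A * Real.log m := by
      rw [hAdef, add_mul]
      apply max_le
      · have : 0 ≤ (1 / Real.log 2) * Real.log m := by positivity
        linarith
      · have : 0 ≤ ((B / Real.log 2 + 1) / l) * Real.log m := by positivity
        linarith
    have hmax0 : (0:ℝ) ≤ max L0 1 := le_trans zero_le_one (le_max_right _ _)
    have h2k : (0:ℝ) ≤ (2:ℝ) ^ k := by positivity
    calc (5:ℝ) ^ k ≤ (8:ℝ) ^ k := pow_le_pow_left₀ (by norm_num) (by norm_num) k
      _ = ((2:ℝ) ^ k) ^ 3 := by rw [← pow_mul, show (8:ℝ) = 2 ^ 3 by norm_num, ← pow_mul]; ring_nf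
      _ ≤ (2 * max L0 1) ^ 3 := pow_le_pow_left₀ h2k hk2 3
      _ = 8 * (max L0 1) ^ 3 := by ring
      _ ≤ 8 * (A * Real.log m) ^ 3 := by
          have := pow_le_pow_left₀ hmax0 hmax 3
          linarith
      _ = 8 * A ^ 3 * (Real.log m) ^ 3 := by ring
end
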